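/- Let n ≥ 1 and let A_1,...,A_k ⊆ {1,...,n} be pairwise intersecting. Then there exists a monotone n-ary term function t in the clone generated by the ternary median med_3 (and projections) such that every A_i is t-insane. -/
import Mathlib


open Cardinal

/-- `A` is `(f,a)`-wild. -/
def WildFor {X : Type*} {n : ℕ} (f : (Fin n → X) → X) (A : Set (Fin n)) (a : Fin n → X) : Prop :=
  #{y : X | ∃ x : Fin n → X, (∀ i, i ∉ A → x i = a i) ∧ f x = y} = #X

/-- `A` is `f`-wild: `(f,a)`-wild for some `a`. -/
def Wild {X : Type*} {n : ℕ} (f : (Fin n → X) → X) (A : Set (Fin n)) : Prop :=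
  ∃ a : Fin n → X, WildFor f A a
/-- `A` is `f`-insane: `(f,a)`-wild for every `a`. -/
def Insane {X : Type*} {n : ℕ} (f : (Fin n → X) → X) (A : Set (Fin n)) : Prop :=
  ∀ a : Fin n → X, WildFor f A a
/-- A clone: a family of sets of finitary operations containing all projections
and closed under composition. -/
structure IsClone {X : Type*} (C : ∀ m : ℕ, Set ((Fin m → X) → X)) : Prop where
  proj : ∀ (m : ℕ) (i : Fin m), (fun x => x i) ∈ C m
  comp : ∀ (m k : ℕ) (f : (Fin m → X) → X) (g : Fin m → ((Fin k → X) → X)),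
    f ∈ C m → (∀ i, g i ∈ C k) → (fun x => f (fun i => g i x)) ∈ C k

/-- The ternary median. -/
def med3 {X : Type*} [LinearOrder X] (x : Fin 3 → X) : X :=
  max (min (x 0) (x 1)) (min (max (x 0) (x 1)) (x 2))

section aux
variable {X : Type*} [LinearOrder X]

/-- median of three elements, curried -/
def mmed (a b c : X) : X := max (min a b) (min (max a b) c)

lemma mmed_mono {a a' b b' c c' : X} (ha : a ≤ a') (hb : b ≤ b') (hc : c ≤ c') :
    mmed a b c ≤ mmed a' b' c' :=
  max_le_max (min_le_min ha hb) (min_le_min (max_le_max ha hb) hc)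

lemma le_mmed {v a b c : X} :
    v ≤ mmed a b c ↔ (v ≤ a ∧ v ≤ b) ∨ ((v ≤ a ∨ v ≤ b) ∧ v ≤ c) := by
  unfold mmed
  rw [le_max_iff, le_min_iff, le_min_iff, le_max_iff]

lemma mmed_le {v a b c : X} :
    mmed a b c ≤ v ↔ (a ≤ v ∨ b ≤ v) ∧ ((a ≤ v ∧ b ≤ v) ∨ c ≤ v) := by
  unfold mmed
  rw [max_le_iff, min_le_iff, min_le_iff, max_le_iff]

end aux

/-- Syntactic terms over the ternary median. -/
inductive MTerm (n : ℕ) where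
  | var : Fin n → MTerm n
  | med : MTerm n → MTerm n → MTerm n → MTerm n

namespace MTerm

variable {n : ℕ}

def eval {X : Type*} [LinearOrder X] : MTerm n → (Fin n → X) → X
  | var i, x => x i
  | med p q r, x => mmed (p.eval x) (q.eval x) (r.eval x)

def evalB : MTerm n → (Fin n → Bool) → Bool
  | var i, b => b i
  | med p q r, b => (p.evalB b && q.evalB b) || ((p.evalB b || q.evalB b) && r.evalB b)

lemma eval_monotone {X : Type*} [LinearOrder X] (t : MTerm n) :
    Monotone (fun x : Fin n → X => t.eval x) := by
  induction t with
  | var i => exact fun x y h => h i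
  | med p q r hp hq hr => exact fun x y h => mmed_mono (hp h) (hq h) (hr h)

lemma mem_clone {X : Type*} [LinearOrder X] (t : MTerm n)
    (C : ∀ m : ℕ, Set ((Fin m → X) → X)) (hC : IsClone C) (hmed : med3 ∈ C 3) :
    (fun x => t.eval x) ∈ C n := by
  induction t with
  | var i => exact hC.proj n i
  | med p q r hp hq hr =>
    have h := hC.comp 3 n med3
      ![fun x => p.eval x, fun x => q.eval x, fun x => r.eval x] hmed
      (by intro i; fin_cases i <;> assumption)
    exact h

lemma le_eval_iff {X : Type*} [LinearOrder X] (t : MTerm n) (x : Fin n → X) (v : X) :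
    v ≤ t.eval x ↔ t.evalB (fun j => decide (v ≤ x j)) = true := by
  induction t with
  | var i => simp [eval, evalB]
  | med p q r hp hq hr =>
    simp only [eval, evalB, le_mmed, hp, hq, hr, Bool.or_eq_true, Bool.and_eq_true]
    try tauto

lemma eval_le_iff {X : Type*} [LinearOrder X] (t : MTerm n) (x : Fin n → X) (v : X) :
    t.eval x ≤ v ↔ t.evalB (fun j => decide (x j ≤ v)) = true := by
  induction t with
  | var i => simp [eval, evalB]
  | med p q r hp hq hr =>
    simp only [eval, evalB, mmed_le, hp, hq, hr, Bool.or_eq_true, Bool.and_eq_true]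
    try tauto

end MTerm

/-- Two-point interpolation by projections for monotone self-dual boolean functions. -/
lemma two_point {n : ℕ} (g : (Fin n → Bool) → Bool)
    (hmono : ∀ b b' : Fin n → Bool, (∀ j, b j = true → b' j = true) → g b = true → g b' = true)
    (hsd : ∀ b, g (fun j => !(b j)) = !(g b)) (u w : Fin n → Bool) :
    ∃ j, u j = g u ∧ w j = g w := by
  by_contra h
  push_neg at h
  cases hu : g u <;> cases hw : g w
  · -- both false : !w ≤ u
    have hle : ∀ j, (!(w j)) = true → u j = true := by
      intro j hj
      have hwj : w j = false := by simpa using hj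
      by_contra huj
      have huj' : u j = false := by simpa using huj
      exact (h j (by rw [huj', hu])) (by rw [hwj, hw])
    have hgw : g (fun j => !(w j)) = true := by rw [hsd w, hw]; rfl
    have := hmono _ u hle hgw
    rw [hu] at this
    exact absurd this (by simp)
  · -- g u = false, g w = true : w ≤ u
    have hle : ∀ j, w j = true → u j = true := by
      intro j hj
      by_contra huj
      have huj' : u j = false := by simpa using huj
      exact (h j (by rw [huj', hu])) (by rw [hj, hw])
    have := hmono w u hle hw
    rw [hu] at this
    exact absurd this (by simp)
  · -- g u = true, g w = false : u ≤ w
    have hle : ∀ j, u j = true → w j = true := by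
      intro j hj
      have h2 := h j (by rw [hj, hu])
      rw [hw] at h2
      simpa using h2
    have := hmono u w hle hu
    rw [hw] at this
    exact absurd this (by simp)
  · -- both true : u ≤ !w
    have hle : ∀ j, u j = true → (!(w j)) = true := by
      intro j hj
      have h2 := h j (by rw [hj, hu])
      rw [hw] at h2
      simp only [Bool.not_eq_true] at h2 ⊢
      simpa using h2
    have := hmono u _ hle hu
    rw [hsd w, hw] at this
    exact absurd this (by simp)

/-- Any monotone self-dual boolean function can be interpolated on any finite set
by a median term. -/
lemma interp {n : ℕ} (hn : 1 ≤ n) (g : (Fin n → Bool) → Bool)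
    (hmono : ∀ b b' : Fin n → Bool, (∀ j, b j = true → b' j = true) → g b = true → g b' = true)
    (hsd : ∀ b, g (fun j => !(b j)) = !(g b)) :
    ∀ S : Finset (Fin n → Bool), ∃ t : MTerm n, ∀ b ∈ S, t.evalB b = g b := by
  intro S
  induction S using Finset.strongInduction with
  | _ S ih =>
  by_cases h3 : 3 ≤ S.card
  · have h1 : 0 < S.card := by omega
    obtain ⟨a, ha⟩ := Finset.card_pos.mp h1
    have h2 : 0 < (S.erase a).card := by rw [Finset.card_erase_of_mem ha]; omega
    obtain ⟨b, hb⟩ := Finset.card_pos.mp h2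
    have hbS : b ∈ S := Finset.mem_of_mem_erase hb
    have hba : b ≠ a := Finset.ne_of_mem_erase hb
    have h2' : 0 < ((S.erase a).erase b).card := by
      rw [Finset.card_erase_of_mem hb, Finset.card_erase_of_mem ha]; omega
    obtain ⟨c, hc⟩ := Finset.card_pos.mp h2'
    have hcb : c ≠ b := Finset.ne_of_mem_erase hc
    have hca : c ≠ a := Finset.ne_of_mem_erase (Finset.mem_of_mem_erase hc)
    have hcS : c ∈ S := Finset.mem_of_mem_erase (Finset.mem_of_mem_erase hc)
    obtain ⟨t₁, ht₁⟩ := ih (S.erase a) (Finset.erase_ssubset ha)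
    obtain ⟨t₂, ht₂⟩ := ih (S.erase b) (Finset.erase_ssubset hbS)
    obtain ⟨t₃, ht₃⟩ := ih (S.erase c) (Finset.erase_ssubset hcS)
    refine ⟨MTerm.med t₁ t₂ t₃, fun s hs => ?_⟩
    have maj : ∀ x y z v : Bool,
        ((x = v ∧ y = v) ∨ (x = v ∧ z = v) ∨ (y = v ∧ z = v)) →
        ((x && y) || ((x || y) && z)) = v := by decide
    show ((t₁.evalB s && t₂.evalB s) || ((t₁.evalB s || t₂.evalB s) && t₃.evalB s)) = g s
    by_cases hsa : s = a
    · subst hsa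
      refine maj _ _ _ _ (Or.inr (Or.inr ⟨?_, ?_⟩))
      · exact ht₂ s (Finset.mem_erase.mpr ⟨hba.symm, hs⟩)
      · exact ht₃ s (Finset.mem_erase.mpr ⟨hca.symm, hs⟩)
    · by_cases hsb : s = b
      · subst hsb
        refine maj _ _ _ _ (Or.inr (Or.inl ⟨?_, ?_⟩))
        · exact ht₁ s (Finset.mem_erase.mpr ⟨hba, hs⟩)
        · exact ht₃ s (Finset.mem_erase.mpr ⟨hcb.symm, hs⟩)
      · refine maj _ _ _ _ (Or.inl ⟨?_, ?_⟩)
        · exact ht₁ s (Finset.mem_erase.mpr ⟨hsa, hs⟩)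
        · exact ht₂ s (Finset.mem_erase.mpr ⟨hsb, hs⟩)
  · -- small case: S ⊆ {u, w}
    have hsmall : ∃ u w : Fin n → Bool, ∀ b ∈ S, b = u ∨ b = w := by
      rcases S.eq_empty_or_nonempty with hS | ⟨u, hu⟩
      · exact ⟨fun _ => true, fun _ => true, by simp [hS]⟩
      · rcases (S.erase u).eq_empty_or_nonempty with hS' | ⟨w, hw⟩
        · refine ⟨u, u, fun b hb => ?_⟩
          by_cases hbu : b = u
          · exact Or.inl hbu
          · exact absurd (Finset.mem_erase.mpr ⟨hbu, hb⟩) (by rw [hS']; simp)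
        · have hwu : w ≠ u := Finset.ne_of_mem_erase hw
          have hwS : w ∈ S := Finset.mem_of_mem_erase hw
          refine ⟨u, w, fun b hb => ?_⟩
          by_contra hne
          push_neg at hne
          obtain ⟨hbu, hbw⟩ := hne
          have hsub : ({b, u, w} : Finset (Fin n → Bool)) ⊆ S := by
            intro z hz
            simp only [Finset.mem_insert, Finset.mem_singleton] at hz
            rcases hz with rfl | rfl | rfl <;> assumption
          have hcard : ({b, u, w} : Finset (Fin n → Bool)).card = 3 := by
            rw [Finset.card_insert_of_notMem (by simp [hbu, hbw]),
              Finset.card_insert_of_notMem (by simp [hwu.symm]), Finset.card_singleton]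
          have := Finset.card_le_card hsub
          omega
    obtain ⟨u, w, hS⟩ := hsmall
    obtain ⟨j, hj⟩ := two_point g hmono hsd u w
    refine ⟨MTerm.var j, fun b hb => ?_⟩
    rcases hS b hb with rfl | rfl
    · exact hj.1
    · exact hj.2

/-- For pairwise intersecting `A₁,...,A_k ⊆ {1,...,n}` there is a monotone term function
in the clone generated by `med₃` making every `Aᵢ` insane. -/
theorem exists_median_term_insane {X : Type*} [LinearOrder X] [WellFoundedLT X]
    (hreg : (#X).IsRegular) (hbdd : ∀ s : Set X, BddAbove s ↔ #s < #X)
    {n k : ℕ} (hn : 1 ≤ n) (A : Fin k → Set (Fin n))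
    (hA : ∀ i j, (A i ∩ A j).Nonempty) :
    ∃ t : (Fin n → X) → X,
      (∀ C : ∀ m : ℕ, Set ((Fin m → X) → X), IsClone C → med3 ∈ C 3 → t ∈ C n) ∧
      Monotone t ∧ ∀ i, Insane t (A i) := by
  classical
  have h0 : (0 : ℕ) < n := hn
  set i0 : Fin n := ⟨0, h0⟩ with hi0
  set P : (Fin n → Bool) → Prop := fun b =>
    (∃ i, ∀ j ∈ A i, b j = true) ∨ ((∀ i, ¬ ∀ j ∈ A i, b j = false) ∧ b i0 = true) with hP
  set g : (Fin n → Bool) → Bool := fun b => decide (P b) with hg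
  have hgiff : ∀ b, g b = true ↔ P b := by
    intro b; rw [hg]; exact decide_eq_true_iff
  have hmono : ∀ b b' : Fin n → Bool, (∀ j, b j = true → b' j = true) →
      g b = true → g b' = true := by
    intro b b' hle hb
    rw [hgiff] at hb ⊢
    rcases hb with ⟨i, hi⟩ | ⟨hno, hb0⟩
    · exact Or.inl ⟨i, fun j hj => hle j (hi j hj)⟩
    · refine Or.inr ⟨fun i hi' => hno i (fun j hj => ?_), hle _ hb0⟩
      cases hbj : b j with
      | false => rfl
      | true => exact absurd (hle j hbj) (by simp [hi' j hj])
  have hPsd : ∀ b : Fin n → Bool, (P (fun j => !(b j)) ↔ ¬ P b) := by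
    intro b
    constructor
    · rintro (⟨i, hi⟩ | ⟨hno, hb0⟩) hPb
      · rcases hPb with ⟨i', hi'⟩ | ⟨hno', hb0'⟩
        · obtain ⟨e, hei, hei'⟩ := hA i i'
          have h1 := hi e hei
          have h2 := hi' e hei'
          simp [h2] at h1
        · exact hno' i (fun j hj => by simpa using hi j hj)
      · rcases hPb with ⟨i', hi'⟩ | ⟨hno', hb0'⟩
        · exact hno i' (fun j hj => by simp [hi' j hj])
        · simp [hb0'] at hb0
    · intro hnb
      by_cases hex : ∃ i, ∀ j ∈ A i, b j = false
      · obtain ⟨i, hi⟩ := hex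
        exact Or.inl ⟨i, fun j hj => by simp [hi j hj]⟩
      · have hni : ∀ i, ¬ ∀ j ∈ A i, b j = false := fun i hi => hex ⟨i, hi⟩
        have h1 : ¬ ∃ i, ∀ j ∈ A i, b j = true := fun ⟨i, hi⟩ => hnb (Or.inl ⟨i, hi⟩)
        have hb0 : b i0 = false := by
          by_contra hb0'
          have hb0t : b i0 = true := by simpa using hb0'
          exact hnb (Or.inr ⟨hni, hb0t⟩)
        refine Or.inr ⟨fun i hi => ?_, by simp [hb0]⟩
        exact h1 ⟨i, fun j hj => by simpa using hi j hj⟩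
  have hsd : ∀ b : Fin n → Bool, g (fun j => !(b j)) = !(g b) := by
    intro b
    cases hgb : g b with
    | true =>
      have hnp : ¬ P (fun j => !(b j)) := fun hp => ((hPsd b).mp hp) ((hgiff b).mp hgb)
      rw [hg]
      simp only [decide_eq_false hnp]
      rw [Bool.not_true]
    | false =>
      have hp : P (fun j => !(b j)) := (hPsd b).mpr (fun hp => by
        rw [(hgiff b).mpr hp] at hgb; exact absurd hgb (by simp))
      rw [hg]
      simp only [decide_eq_true hp]
      rw [Bool.not_false]
  obtain ⟨t, ht⟩ := interp hn g hmono hsd Finset.univ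
  have htb : ∀ b, t.evalB b = g b := fun b => ht b (Finset.mem_univ b)
  refine ⟨fun x => t.eval x, fun C hC hmed => t.mem_clone C hC hmed, t.eval_monotone, ?_⟩
  intro i a
  have key : ∀ y : X, t.eval (fun j => if j ∈ A i then y else a j) = y := by
    intro y
    set x : Fin n → X := fun j => if j ∈ A i then y else a j with hx
    have hxy : ∀ j ∈ A i, x j = y := fun j hj => by rw [hx]; exact if_pos hj
    apply le_antisymm
    · rw [t.eval_le_iff, htb, hgiff]
      exact Or.inl ⟨i, fun j hj => decide_eq_true (le_of_eq (hxy j hj))⟩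
    · rw [t.le_eval_iff, htb, hgiff]
      exact Or.inl ⟨i, fun j hj => decide_eq_true (le_of_eq (hxy j hj).symm)⟩
  show WildFor (fun x => t.eval x) (A i) a
  unfold WildFor
  have hset : {y : X | ∃ x : Fin n → X, (∀ j, j ∉ A i → x j = a j) ∧
      (fun x => t.eval x) x = y} = Set.univ := by
    ext y
    simp only [Set.mem_setOf_eq, Set.mem_univ, iff_true]
    exact ⟨fun j => if j ∈ A i then y else a j, fun j hj => if_neg hj, key y⟩
  rw [hset, Cardinal.mk_univ]
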